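/- With V^{m,n} = V^{⊗m} ⊗ (V*)^{⊗n} for dim V = N, the kernel of 𝒜_{m,n} = Σ_{a,b'} τ_{ab'} equals the traceless subspace V₀^{m,n} = ∩_{a,b'} ker(tr_{ab'}), the image of 𝒜_{m,n} equals the span V₁^{m,n} of the images of all insertion maps tr⁺_{ab'}, and V^{m,n} = V₀^{m,n} ⊕ V₁^{m,n}. -/

import Mathlib

open scoped BigOperators

noncomputable section

/-- Mixed tensors of valence (m,n) on an N-dimensional space, given by components. -/
abbrev Tens (N m n : ℕ) := (Fin m → Fin N) → (Fin n → Fin N) → ℂ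

namespace Mixed

variable (N : ℕ)

/-- The contraction (trace) map `tr_{ab'}` contracting the a-th contravariant slot
with the b-th covariant slot. -/
def trMap (m n : ℕ) (a : Fin (m+1)) (b : Fin (n+1)) :
    Tens N (m+1) (n+1) →ₗ[ℂ] Tens N m n where
  toFun t := fun i j => ∑ k : Fin N, t (a.insertNth k i) (b.insertNth k j)
  map_add' t s := by funext i j; simp [Finset.sum_add_distrib]
  map_smul' c t := by funext i j; simp [Finset.mul_sum]

/-- The insertion map `tr⁺_{ab'}` inserting the canonical invariant `∑ᵢ eᵢ ⊗ eⁱ`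
at positions a and b. -/
def insMap (m n : ℕ) (a : Fin (m+1)) (b : Fin (n+1)) :
    Tens N m n →ₗ[ℂ] Tens N (m+1) (n+1) where
  toFun t := fun i j =>
    if i a = j b then t (fun x => i (a.succAbove x)) (fun y => j (b.succAbove y)) else 0
  map_add' t s := by funext i j; by_cases h : i a = j b <;> simp [h]
  map_smul' c t := by funext i j; by_cases h : i a = j b <;> simp [h]

/-- `τ_{ab'} = tr⁺_{ab'} ∘ tr_{ab'}`. -/
def tau (m n : ℕ) (a : Fin (m+1)) (b : Fin (n+1)) :
    Module.End ℂ (Tens N (m+1) (n+1)) :=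
  (insMap N m n a b).comp (trMap N m n a b)

/-- `𝒜_{m,n} = ∑_{a,b'} τ_{ab'}`. -/
def AOp (m n : ℕ) : Module.End ℂ (Tens N (m+1) (n+1)) :=
  ∑ a : Fin (m+1), ∑ b : Fin (n+1), tau N m n a b

/-- The traceless subspace: common kernel of all contractions. -/
def traceless (m n : ℕ) : Submodule ℂ (Tens N (m+1) (n+1)) :=
  ⨅ a : Fin (m+1), ⨅ b : Fin (n+1), LinearMap.ker (trMap N m n a b)

/-- The span of the images of all insertion maps. -/
def traceSpan (m n : ℕ) : Submodule ℂ (Tens N (m+1) (n+1)) :=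
  ⨆ a : Fin (m+1), ⨆ b : Fin (n+1), LinearMap.range (insMap N m n a b)

end Mixed

namespace MixedAux

open Mixed Complex Module

/-- Hermitian pairing on components. -/
def pr {N m n : ℕ} (s t : Tens N m n) : ℂ :=
  ∑ i, ∑ j, (starRingEnd ℂ) (s i j) * t i j

lemma pr_self_eq {N m n : ℕ} (t : Tens N m n) :
    pr t t = ((∑ i, ∑ j, Complex.normSq (t i j) : ℝ) : ℂ) := by
  simp [pr, ← Complex.normSq_eq_conj_mul_self]

lemma pr_self_eq_zero {N m n : ℕ} {t : Tens N m n} (h : pr t t = 0) : t = 0 := by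
  rw [pr_self_eq, Complex.ofReal_eq_zero] at h
  have h2 := (Finset.sum_eq_zero_iff_of_nonneg (fun i _ =>
    Finset.sum_nonneg fun j _ => Complex.normSq_nonneg _)).1 h
  funext i j
  have h3 := (Finset.sum_eq_zero_iff_of_nonneg (fun j _ =>
    Complex.normSq_nonneg (t i j))).1 (h2 i (Finset.mem_univ i)) j (Finset.mem_univ j)
  simpa using Complex.normSq_eq_zero.1 h3

lemma pr_zero_right {N m n : ℕ} (s : Tens N m n) : pr s 0 = 0 := by simp [pr]

lemma pr_add_left {N m n : ℕ} (s s' t : Tens N m n) :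
    pr (s + s') t = pr s t + pr s' t := by
  simp [pr, add_mul, Finset.sum_add_distrib]

lemma pr_zero_left {N m n : ℕ} (t : Tens N m n) : pr 0 t = 0 := by simp [pr]

lemma pr_sum_left {N m n : ℕ} {ι : Type*} (s : Finset ι) (f : ι → Tens N m n)
    (t : Tens N m n) : pr (∑ x ∈ s, f x) t = ∑ x ∈ s, pr (f x) t := by
  classical
  induction s using Finset.induction with
  | empty => simp [pr_zero_left]
  | insert _ _ h ih => simp [Finset.sum_insert h, pr_add_left, ih]

lemma sum_insertNth {α : Type*} [AddCommMonoid α] {N q : ℕ} (c : Fin (q+1))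
    (f : (Fin (q+1) → Fin N) → α) :
    ∑ i, f i = ∑ k : Fin N, ∑ i' : Fin q → Fin N, f (c.insertNth k i') := by
  rw [← Equiv.sum_comp (Fin.insertNthEquiv (fun _ => Fin N) c) f, Fintype.sum_prod_type]
  rfl

lemma pr_adjoint {N m n : ℕ} (a : Fin (m+1)) (b : Fin (n+1)) (u : Tens N m n)
    (t : Tens N (m+1) (n+1)) :
    pr (insMap N m n a b u) t = pr u (trMap N m n a b t) := by
  unfold pr insMap trMap
  simp only [LinearMap.coe_mk, AddHom.coe_mk]
  rw [sum_insertNth a]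
  refine Eq.trans (Finset.sum_congr rfl fun k _ => Finset.sum_congr rfl fun i' _ =>
    sum_insertNth b _) ?_
  simp only [Fin.insertNth_apply_same, Fin.insertNth_apply_succAbove]
  simp only [apply_ite (starRingEnd ℂ), map_zero, ite_mul, zero_mul, Finset.mul_sum]
  rw [Finset.sum_comm]
  refine Finset.sum_congr rfl fun i' _ => ?_
  simp only [Finset.sum_ite_irrel, Finset.sum_const_zero, Finset.sum_ite_eq,
    Finset.mem_univ, if_true]
  exact Finset.sum_comm

/-- The identification of `Tens` with a Euclidean space. -/
def eqv (N m n : ℕ) :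
    Tens N m n ≃ₗ[ℂ] EuclideanSpace ℂ ((Fin m → Fin N) × (Fin n → Fin N)) :=
  (LinearEquiv.curry ℂ ℂ _ _).symm ≪≫ₗ (WithLp.linearEquiv 2 ℂ _).symm

lemma eqv_apply {N m n : ℕ} (t : Tens N m n) (p) : eqv N m n t p = t p.1 p.2 := rfl

lemma inner_eqv {N m n : ℕ} (s t : Tens N m n) :
    (inner ℂ (eqv N m n s) (eqv N m n t) : ℂ) = pr s t := by
  simp only [PiLp.inner_apply, RCLike.inner_apply, eqv_apply, pr]
  rw [Fintype.sum_prod_type]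
  exact Finset.sum_congr rfl fun _ _ => Finset.sum_congr rfl fun _ _ => mul_comm _ _

lemma inner_eqv' {N m n : ℕ} (s : Tens N m n)
    (x : EuclideanSpace ℂ ((Fin m → Fin N) × (Fin n → Fin N))) :
    (inner ℂ (eqv N m n s) x : ℂ) = pr s ((eqv N m n).symm x) := by
  conv_lhs => rw [← (eqv N m n).apply_symm_apply x]
  exact inner_eqv s _

lemma AOp_apply {N m n : ℕ} (t : Tens N (m+1) (n+1)) :
    Mixed.AOp N m n t = ∑ p : Fin (m+1) × Fin (n+1),
      insMap N m n p.1 p.2 (trMap N m n p.1 p.2 t) := by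
  rw [Fintype.sum_prod_type]
  simp [AOp, tau, LinearMap.sum_apply]

lemma mem_traceless_iff {N m n : ℕ} (t : Tens N (m+1) (n+1)) :
    t ∈ Mixed.traceless N m n ↔
      ∀ (a : Fin (m+1)) (b : Fin (n+1)) (u : Tens N m n),
        pr (insMap N m n a b u) t = 0 := by
  simp only [traceless, Submodule.mem_iInf, LinearMap.mem_ker]
  constructor
  · intro h a b u
    rw [pr_adjoint, h a b, pr_zero_right]
  · intro h a b
    refine pr_self_eq_zero ?_
    rw [← pr_adjoint]
    exact h a b _

lemma ker_eq (N m n : ℕ) :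
    LinearMap.ker (Mixed.AOp N m n) = Mixed.traceless N m n := by
  ext t
  rw [LinearMap.mem_ker]
  constructor
  · intro ht
    have h0 : pr (Mixed.AOp N m n t) t = 0 := by rw [ht, pr_zero_left]
    rw [AOp_apply, pr_sum_left] at h0
    have h1 : ∑ p : Fin (m+1) × Fin (n+1),
        ((∑ i, ∑ j, Complex.normSq (trMap N m n p.1 p.2 t i j) : ℝ) : ℂ) = 0 := by
      rw [← h0]
      exact Finset.sum_congr rfl fun p _ => by
        rw [pr_adjoint, pr_self_eq]
    rw [← Complex.ofReal_sum, Complex.ofReal_eq_zero] at h1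
    have h2 := (Finset.sum_eq_zero_iff_of_nonneg (fun p _ =>
      Finset.sum_nonneg fun i _ => Finset.sum_nonneg fun j _ =>
        Complex.normSq_nonneg _)).1 h1
    simp only [traceless, Submodule.mem_iInf, LinearMap.mem_ker]
    intro a b
    refine pr_self_eq_zero ?_
    rw [pr_self_eq, Complex.ofReal_eq_zero]
    exact h2 (a, b) (Finset.mem_univ _)
  · intro ht
    have h : ∀ (a : Fin (m+1)) (b : Fin (n+1)), trMap N m n a b t = 0 := by
      simpa only [traceless, Submodule.mem_iInf, LinearMap.mem_ker] using ht
    rw [AOp_apply]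
    refine Finset.sum_eq_zero fun p _ => ?_
    rw [h p.1 p.2, map_zero]

lemma map_traceless (N m n : ℕ) :
    (Mixed.traceless N m n).map (eqv N (m+1) (n+1) : Tens N (m+1) (n+1) →ₗ[ℂ] EuclideanSpace ℂ ((Fin (m+1) → Fin N) × (Fin (n+1) → Fin N))) =
      ((Mixed.traceSpan N m n).map (eqv N (m+1) (n+1) : Tens N (m+1) (n+1) →ₗ[ℂ] EuclideanSpace ℂ ((Fin (m+1) → Fin N) × (Fin (n+1) → Fin N))))ᗮ := by
  ext x
  rw [Submodule.map_equiv_eq_comap_symm, Submodule.mem_comap, mem_traceless_iff]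
  unfold traceSpan
  simp only [Submodule.map_iSup]
  rw [← Submodule.iInf_orthogonal]
  simp only [← Submodule.iInf_orthogonal, Submodule.mem_iInf, Submodule.mem_orthogonal]
  simp only [LinearEquiv.coe_coe]
  constructor
  · rintro h a b v ⟨w, ⟨u, rfl⟩, rfl⟩
    simp only [LinearEquiv.coe_coe]
    rw [inner_eqv']
    exact h a b u
  · intro h a b u
    rw [← inner_eqv']
    exact h a b _ ⟨insMap N m n a b u, ⟨u, rfl⟩, rfl⟩

end MixedAux

/-- ker 𝒜_{m,n} equals the traceless subspace V₀^{m,n}, the image of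
𝒜_{m,n} equals the span V₁^{m,n} of the images of the insertion maps, and
V^{m,n} = V₀^{m,n} ⊕ V₁^{m,n}. -/
theorem ker_im_Amn (N m n : ℕ) :
    LinearMap.ker (Mixed.AOp N m n) = Mixed.traceless N m n ∧
    LinearMap.range (Mixed.AOp N m n) = Mixed.traceSpan N m n ∧
    IsCompl (Mixed.traceless N m n) (Mixed.traceSpan N m n) := by
  classical
  have hker := MixedAux.ker_eq N m n
  have horth := MixedAux.map_traceless N m n
  set e := MixedAux.eqv N (m+1) (n+1) with he
  have hcompl' : IsCompl ((Mixed.traceless N m n).map (e : Tens N (m+1) (n+1) →ₗ[ℂ] EuclideanSpace ℂ ((Fin (m+1) → Fin N) × (Fin (n+1) → Fin N))))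
      ((Mixed.traceSpan N m n).map (e : Tens N (m+1) (n+1) →ₗ[ℂ] EuclideanSpace ℂ ((Fin (m+1) → Fin N) × (Fin (n+1) → Fin N)))) := by
    rw [horth]
    exact Submodule.isCompl_orthogonal_of_hasOrthogonalProjection.symm
  have hcompl : IsCompl (Mixed.traceless N m n) (Mixed.traceSpan N m n) :=
    ((Submodule.orderIsoMapComap e).isCompl_iff).mpr hcompl'
  have hdim : Module.finrank ℂ (Mixed.traceSpan N m n) +
      Module.finrank ℂ (Mixed.traceless N m n) =
      Module.finrank ℂ (Tens N (m+1) (n+1)) := by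
    have h1 := Submodule.finrank_add_finrank_orthogonal
      (K := (Mixed.traceSpan N m n).map (e : Tens N (m+1) (n+1) →ₗ[ℂ] EuclideanSpace ℂ ((Fin (m+1) → Fin N) × (Fin (n+1) → Fin N))))
    rw [← horth, LinearEquiv.finrank_map_eq, LinearEquiv.finrank_map_eq] at h1
    rw [h1]
    exact (LinearEquiv.finrank_eq e).symm
  have hrange_le : LinearMap.range (Mixed.AOp N m n) ≤ Mixed.traceSpan N m n := by
    rintro x ⟨t, rfl⟩
    rw [MixedAux.AOp_apply]
    refine Submodule.sum_mem _ fun p _ => ?_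
    exact Submodule.mem_iSup_of_mem p.1 (Submodule.mem_iSup_of_mem p.2 ⟨_, rfl⟩)
  have hrange : LinearMap.range (Mixed.AOp N m n) = Mixed.traceSpan N m n := by
    refine (Submodule.eq_of_le_of_finrank_le hrange_le ?_)
    have h2 := LinearMap.finrank_range_add_finrank_ker (Mixed.AOp N m n)
    rw [hker] at h2
    omega
  exact ⟨hker, hrange, hcompl⟩
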